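/- arXiv:2512.01445 — 2 statements merged into one kernel-verified Lean document; each statement's English description precedes it below -/
import Mathlib

section
/- Let 0 < ρ₁ < ρ₂, h₁, h₂ > 0, g > 0, and define P and U_c as above. If 0 < U < U_c then there exists a unique s⋆ > 0 with P(s⋆) = U; if U > U_c then there is no s > 0 with P(s) = U. -/
open Real Set

noncomputable def Gcoth (x : ℝ) : ℝ := x * Real.cosh x / Real.sinh x

lemma sinh_lt_self_mul_cosh {x : ℝ} (hx : 0 < x) : Real.sinh x < x * Real.cosh x := by
  have h : StrictMonoOn (fun x => x * Real.cosh x - Real.sinh x) (Set.Ici 0) := by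
    apply strictMonoOn_of_deriv_pos (convex_Ici 0)
    · fun_prop
    · intro y hy
      rw [interior_Ici, mem_Ioi] at hy
      have hd : HasDerivAt (fun x => x * Real.cosh x - Real.sinh x)
          (1 * Real.cosh y + y * Real.sinh y - Real.cosh y) y :=
        ((hasDerivAt_id y).mul (Real.hasDerivAt_cosh y)).sub (Real.hasDerivAt_sinh y)
      rw [hd.deriv]
      have := Real.sinh_pos_iff.mpr hy
      nlinarith
  have := h (self_mem_Ici) (le_of_lt hx : (0:ℝ) ≤ x) hx
  simpa using this

lemma one_lt_Gcoth {x : ℝ} (hx : 0 < x) : 1 < Gcoth x := by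
  have hs := Real.sinh_pos_iff.mpr hx
  rw [Gcoth, lt_div_iff₀ hs, one_mul]
  exact sinh_lt_self_mul_cosh hx

lemma Gcoth_lt_cosh {x : ℝ} (hx : 0 < x) : Gcoth x < Real.cosh x := by
  have hs := Real.sinh_pos_iff.mpr hx
  rw [Gcoth, div_lt_iff₀ hs]
  have hxs : x < Real.sinh x := Real.self_lt_sinh_iff.mpr hx
  nlinarith [Real.cosh_pos x]

lemma le_Gcoth {x : ℝ} (hx : 0 < x) : x ≤ Gcoth x := by
  have hs := Real.sinh_pos_iff.mpr hx
  rw [Gcoth, le_div_iff₀ hs]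
  have : Real.sinh x < Real.cosh x := by
    nlinarith [Real.cosh_sub_sinh x, Real.exp_pos (-x)]
  nlinarith

lemma Gcoth_strictMono : StrictMonoOn Gcoth (Set.Ioi 0) := by
  apply strictMonoOn_of_deriv_pos (convex_Ioi 0)
  · apply ContinuousOn.div (by fun_prop) (by fun_prop)
    intro y hy
    exact (Real.sinh_pos_iff.mpr hy).ne'
  · intro y hy
    rw [interior_Ioi, mem_Ioi] at hy
    have hs := Real.sinh_pos_iff.mpr hy
    have hd : HasDerivAt Gcoth
        (((1 * Real.cosh y + y * Real.sinh y) * Real.sinh y -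
          y * Real.cosh y * Real.cosh y) / Real.sinh y ^ 2) y :=
      (((hasDerivAt_id y).mul (Real.hasDerivAt_cosh y)).div (Real.hasDerivAt_sinh y) hs.ne')
    rw [hd.deriv]
    apply div_pos _ (pow_pos hs 2)
    have h2 : 2 * y < Real.sinh (2 * y) := Real.self_lt_sinh_iff.mpr (by linarith)
    rw [Real.sinh_two_mul] at h2
    nlinarith [Real.cosh_sq_sub_sinh_sq y]

set_option maxHeartbeats 1000000 in
theorem critical_speed_dichotomy (ρ₁ ρ₂ h₁ h₂ g U : ℝ)
    (hρ₁ : 0 < ρ₁) (hρ : ρ₁ < ρ₂) (hh₁ : 0 < h₁) (hh₂ : 0 < h₂) (hg : 0 < g)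
    (R P : ℝ → ℝ)
    (hR : ∀ s, R s = 2 * Real.pi * s *
        (ρ₁ * (Real.cosh (2 * Real.pi * s * h₁) / Real.sinh (2 * Real.pi * s * h₁)) +
         ρ₂ * (Real.cosh (2 * Real.pi * s * h₂) / Real.sinh (2 * Real.pi * s * h₂))))
    (hP : ∀ s, P s = Real.sqrt ((ρ₂ - ρ₁) * g / R s)) :
    (0 < U → U < Real.sqrt ((ρ₂ - ρ₁) * g / (ρ₁ / h₁ + ρ₂ / h₂)) →
      ∃! s : ℝ, 0 < s ∧ P s = U) ∧
    (U > Real.sqrt ((ρ₂ - ρ₁) * g / (ρ₁ / h₁ + ρ₂ / h₂)) →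
      ¬ ∃ s : ℝ, 0 < s ∧ P s = U) := by
  have hπ : 0 < Real.pi := Real.pi_pos
  have hρ₂ : 0 < ρ₂ := lt_trans hρ₁ hρ
  set A : ℝ := ρ₁ / h₁ + ρ₂ / h₂ with hAdef
  have hA : 0 < A := by rw [hAdef]; positivity
  set D : ℝ := (ρ₂ - ρ₁) * g with hDdef
  have hD : 0 < D := by
    rw [hDdef]
    have : 0 < ρ₂ - ρ₁ := by linarith
    positivity
  -- rewrite R in terms of Gcoth
  have hRG : ∀ s : ℝ, 0 < s → R s =
      ρ₁ / h₁ * Gcoth (2 * Real.pi * s * h₁) + ρ₂ / h₂ * Gcoth (2 * Real.pi * s * h₂) := by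
    intro s hs
    rw [hR s, Gcoth, Gcoth]
    field_simp
  have hx₁ : ∀ s : ℝ, 0 < s → 0 < 2 * Real.pi * s * h₁ := fun s hs => by positivity
  have hx₂ : ∀ s : ℝ, 0 < s → 0 < 2 * Real.pi * s * h₂ := fun s hs => by positivity
  -- R s > A for s > 0
  have hRgtA : ∀ s : ℝ, 0 < s → A < R s := by
    intro s hs
    rw [hRG s hs, hAdef]
    have g1 := one_lt_Gcoth (hx₁ s hs)
    have g2 := one_lt_Gcoth (hx₂ s hs)
    have p1 : 0 < ρ₁ / h₁ := by positivity
    have p2 : 0 < ρ₂ / h₂ := by positivity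
    nlinarith
  have hRpos : ∀ s : ℝ, 0 < s → 0 < R s := fun s hs => lt_trans hA (hRgtA s hs)
  -- key equivalence
  have hPU : ∀ s : ℝ, 0 < s → 0 < U → (P s = U ↔ R s = D / U ^ 2) := by
    intro s hs hU
    rw [hP s]
    constructor
    · intro h
      have hRs := hRpos s hs
      have hnn : 0 ≤ D / R s := (div_pos hD hRs).le
      have h2 : D / R s = U ^ 2 := by
        rw [← h, Real.sq_sqrt hnn]
      rw [div_eq_iff hRs.ne'] at h2
      rw [eq_div_iff (pow_ne_zero 2 hU.ne')]
      linarith [h2]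
    · intro h
      rw [h]
      have : D / (D / U ^ 2) = U ^ 2 := by
        field_simp
      rw [this, Real.sqrt_sq hU.le]
  constructor
  · -- existence and uniqueness
    intro hU hUc
    set C : ℝ := D / U ^ 2 with hCdef
    have hU2 : U ^ 2 < D / A := by
      have := (Real.lt_sqrt hU.le).mp hUc
      linarith [this]
    have hAC : A < C := by
      rw [hCdef, lt_div_iff₀ (by positivity)]
      rw [lt_div_iff₀ hA] at hU2
      linarith
    -- continuity of R on Ioi 0
    have hRcont : ContinuousOn R (Set.Ioi 0) := by
      have : ContinuousOn (fun s => 2 * Real.pi * s *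
          (ρ₁ * (Real.cosh (2 * Real.pi * s * h₁) / Real.sinh (2 * Real.pi * s * h₁)) +
           ρ₂ * (Real.cosh (2 * Real.pi * s * h₂) / Real.sinh (2 * Real.pi * s * h₂))))
          (Set.Ioi 0) := by
        apply ContinuousOn.mul (by fun_prop)
        apply ContinuousOn.add
        · apply ContinuousOn.mul continuousOn_const
          apply ContinuousOn.div (by fun_prop) (by fun_prop)
          intro s hs
          exact (Real.sinh_pos_iff.mpr (hx₁ s hs)).ne'
        · apply ContinuousOn.mul continuousOn_const
          apply ContinuousOn.div (by fun_prop) (by fun_prop)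
          intro s hs
          exact (Real.sinh_pos_iff.mpr (hx₂ s hs)).ne'
      exact this.congr (fun s _ => hR s)
    -- find small a with R a < C
    have hW : ∃ a : ℝ, 0 < a ∧ R a < C := by
      set W : ℝ → ℝ := fun s => ρ₁ / h₁ * Real.cosh (2 * Real.pi * s * h₁) +
        ρ₂ / h₂ * Real.cosh (2 * Real.pi * s * h₂) with hWdef
      have hWc : Continuous W := by fun_prop
      have hW0 : W 0 = A := by simp [hWdef, hAdef]
      have htend : Filter.Tendsto W (nhdsWithin 0 (Set.Ioi 0)) (nhds A) := by
        rw [← hW0]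
        exact (hWc.tendsto 0).mono_left nhdsWithin_le_nhds
      have hev : ∀ᶠ s in nhdsWithin 0 (Set.Ioi 0), W s < C :=
        htend.eventually_lt_const hAC
      obtain ⟨a, ha, haW⟩ := (eventually_mem_nhdsWithin.and hev).exists
      refine ⟨a, ha, ?_⟩
      have hlt : R a < W a := by
        rw [hRG a ha, hWdef]
        have g1 := Gcoth_lt_cosh (hx₁ a ha)
        have g2 := Gcoth_lt_cosh (hx₂ a ha)
        have p1 : 0 < ρ₁ / h₁ := by positivity
        have p2 : 0 < ρ₂ / h₂ := by positivity
        nlinarith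
      linarith
    obtain ⟨a, ha, haC⟩ := hW
    -- big b with R b ≥ C
    set b : ℝ := max a (C / (2 * Real.pi * ρ₁)) with hbdef
    have hab : a ≤ b := le_max_left _ _
    have hb : 0 < b := lt_of_lt_of_le ha hab
    have hbC : C ≤ R b := by
      have h1 : C / (2 * Real.pi * ρ₁) ≤ b := le_max_right _ _
      have h2 : C ≤ 2 * Real.pi * ρ₁ * b := by
        rw [div_le_iff₀ (by positivity)] at h1
        linarith
      rw [hRG b hb]
      have g1 := le_Gcoth (hx₁ b hb)
      have g2 := one_lt_Gcoth (hx₂ b hb)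
      have p1 : ρ₁ / h₁ * (2 * Real.pi * b * h₁) = 2 * Real.pi * ρ₁ * b := by
        field_simp
      have p2 : 0 < ρ₂ / h₂ := by positivity
      have p3 : 0 < ρ₁ / h₁ := div_pos hρ₁ hh₁
      have key := mul_le_mul_of_nonneg_left g1 p3.le
      nlinarith [mul_pos p2 (lt_trans zero_lt_one g2)]
    -- IVT
    have hsub : Set.Icc a b ⊆ Set.Ioi 0 := fun x hx => lt_of_lt_of_le ha hx.1
    have hivt := intermediate_value_Icc hab (hRcont.mono hsub)
    have hCmem : C ∈ Set.Icc (R a) (R b) := ⟨haC.le, hbC⟩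
    obtain ⟨s, hsmem, hsC⟩ := hivt hCmem
    have hs : 0 < s := hsub hsmem
    refine ⟨s, ⟨hs, (hPU s hs hU).mpr hsC⟩, ?_⟩
    rintro y ⟨hy, hyP⟩
    have hyC : R y = C := (hPU y hy hU).mp hyP
    -- strict monotonicity of R
    have hmono : StrictMonoOn R (Set.Ioi 0) := by
      intro s₁ hs₁ s₂ hs₂ h12
      rw [hRG s₁ hs₁, hRG s₂ hs₂]
      have m1 : Gcoth (2 * Real.pi * s₁ * h₁) < Gcoth (2 * Real.pi * s₂ * h₁) :=
        Gcoth_strictMono (hx₁ s₁ hs₁) (hx₁ s₂ hs₂)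
          (by nlinarith [mul_pos (mul_pos (mul_pos two_pos hπ) hh₁) (sub_pos.mpr h12)])
      have m2 : Gcoth (2 * Real.pi * s₁ * h₂) < Gcoth (2 * Real.pi * s₂ * h₂) :=
        Gcoth_strictMono (hx₂ s₁ hs₁) (hx₂ s₂ hs₂)
          (by nlinarith [mul_pos (mul_pos (mul_pos two_pos hπ) hh₂) (sub_pos.mpr h12)])
      have p1 : 0 < ρ₁ / h₁ := div_pos hρ₁ hh₁
      have p2 : 0 < ρ₂ / h₂ := div_pos hρ₂ hh₂
      have k1 := mul_lt_mul_of_pos_left m1 p1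
      have k2 := mul_lt_mul_of_pos_left m2 p2
      linarith
    exact hmono.injOn hy hs (hyC.trans hsC.symm)
  · -- no solution above critical speed
    rintro hUc ⟨s, hs, hPs⟩
    have hlt : D / R s < D / A := by
      apply div_lt_div_of_pos_left hD hA (hRgtA s hs)
    have : P s < Real.sqrt (D / A) := by
      rw [hP s]
      exact Real.sqrt_lt_sqrt (div_pos hD (hRpos s hs)).le hlt
    rw [hPs] at this
    exact absurd hUc (by linarith)
end

section
/- Let ε ≥ 0, ω ∈ ℝ, ω_ε = ω + iε, Δt > 0, T > 0, and C ≥ 0, p ≥ 1. Suppose the sequence (μ⁽ᵏ⁾) and the exact values (μ(kΔt)) satisfy μ⁽ᵏ⁺¹⁾ = e^{iω_ε Δt}(μ⁽ᵏ⁾ − Q_k) and μ((k+1)Δt) = e^{iω_ε Δt}(μ(kΔt) − I_k), with |Q_k − I_k| ≤ C·Δt^{p+1} for all k, and μ⁽⁰⁾ = μ(0). Then for all k with kΔt ≤ T, |μ⁽ᵏ⁾ − μ(kΔt)| ≤ T·C·Δt^p. -/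
open Complex in
theorem exponential_integrator_error (ω ε Δt T C p : ℝ)
    (hε : 0 ≤ ε) (hΔt : 0 < Δt) (hT : 0 < T) (hC : 0 ≤ C) (hp : 1 ≤ p)
    (ωε : ℂ) (hωε : ωε = (ω : ℂ) + I * ε)
    (μnum : ℕ → ℂ) (μex : ℕ → ℂ) (Q Iq : ℕ → ℂ)
    (hnum : ∀ k, μnum (k + 1) = Complex.exp (I * ωε * Δt) * (μnum k - Q k))
    (hex : ∀ k, μex (k + 1) = Complex.exp (I * ωε * Δt) * (μex k - Iq k))
    (hQI : ∀ k, ‖Q k - Iq k‖ ≤ C * Δt ^ (p + 1))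
    (h0 : μnum 0 = μex 0) :
    ∀ k : ℕ, (k : ℝ) * Δt ≤ T →
      ‖μnum k - μex k‖ ≤ T * C * Δt ^ p := by
  have habs : ‖Complex.exp (I * ωε * Δt)‖ ≤ 1 := by
    rw [Complex.norm_exp]
    have hre : (I * ωε * (Δt : ℂ)).re = -ε * Δt := by
      rw [hωε]; simp [Complex.mul_re, Complex.mul_im]
    rw [hre]
    apply Real.exp_le_one_iff.mpr
    nlinarith
  have key : ∀ k : ℕ, ‖μnum k - μex k‖ ≤ (k : ℝ) * (C * Δt ^ (p + 1)) := by
    intro k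
    induction k with
    | zero => simp [h0]
    | succ n ih =>
      have : μnum (n + 1) - μex (n + 1)
          = Complex.exp (I * ωε * Δt) * ((μnum n - μex n) - (Q n - Iq n)) := by
        rw [hnum, hex]; ring
      rw [this, norm_mul]
      calc ‖Complex.exp (I * ωε * Δt)‖ * ‖(μnum n - μex n) - (Q n - Iq n)‖
          ≤ 1 * ‖(μnum n - μex n) - (Q n - Iq n)‖ := by
            apply mul_le_mul_of_nonneg_right habs (norm_nonneg _)
        _ ≤ ‖μnum n - μex n‖ + ‖Q n - Iq n‖ := by
            rw [one_mul]; exact norm_sub_le _ _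
        _ ≤ (n : ℝ) * (C * Δt ^ (p + 1)) + C * Δt ^ (p + 1) := add_le_add ih (hQI n)
        _ = ((n + 1 : ℕ) : ℝ) * (C * Δt ^ (p + 1)) := by push_cast; ring
  intro k hk
  have hsplit : Δt ^ (p + 1) = Δt ^ p * Δt := by
    rw [Real.rpow_add hΔt, Real.rpow_one]
  calc ‖μnum k - μex k‖ ≤ (k : ℝ) * (C * Δt ^ (p + 1)) := key k
    _ = ((k : ℝ) * Δt) * (C * Δt ^ p) := by rw [hsplit]; ring
    _ ≤ T * (C * Δt ^ p) := by
        apply mul_le_mul_of_nonneg_right hk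
        positivity
    _ = T * C * Δt ^ p := by ring
end
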